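/- For the regularized mass-spring energy p(d) = (k/2)(√(dᵀd + ε_r) − l)² with k, ε_r, l > 0 and d ∈ ℝ³, the Hessian satisfies −k(1 + 2l/√ε_r)·I ⪯ ∇²p(d) ⪯ k(1 + 2l/√ε_r)·I for all d. -/

import Mathlib

open scoped RealInnerProductSpace

variable {k εr l : ℝ}

noncomputable abbrev E3 := EuclideanSpace ℝ (Fin 3)

lemma grad_eq (hεr : 0 < εr) (d : E3) :
    HasGradientAt (fun d : E3 => k / 2 * (Real.sqrt (‖d‖ ^ 2 + εr) - l) ^ 2)
      ((k * (1 - l / Real.sqrt (‖d‖ ^ 2 + εr))) • d) d := by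
  have hs : 0 < ‖d‖ ^ 2 + εr := by positivity
  have hsq : 0 < Real.sqrt (‖d‖ ^ 2 + εr) := Real.sqrt_pos.2 hs
  have h1 : HasDerivAt (fun t : ℝ => k / 2 * (Real.sqrt (t + εr) - l) ^ 2)
      (k / 2 * (2 * (Real.sqrt (‖d‖ ^ 2 + εr) - l) ^ 1 * (1 / (2 * Real.sqrt (‖d‖ ^ 2 + εr)) * 1)))
      (‖d‖ ^ 2) := by
    have ha : HasDerivAt (fun t : ℝ => t + εr) 1 (‖d‖ ^ 2) := (hasDerivAt_id _).add_const εr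
    have hb := (Real.hasDerivAt_sqrt (ne_of_gt hs)).comp (‖d‖ ^ 2) ha
    exact ((hb.sub_const l).pow 2).const_mul (k / 2)
  have h2 : HasFDerivAt (fun x : E3 => ‖x‖ ^ 2) (2 • innerSL ℝ d) d :=
    (hasStrictFDerivAt_norm_sq d).hasFDerivAt
  have h3 := h1.comp_hasFDerivAt d h2
  rw [hasGradientAt_iff_hasFDerivAt]
  refine h3.congr_fderiv ?_
  ext v
  simp only [InnerProductSpace.toDual_apply_apply, ContinuousLinearMap.smul_apply,
    ContinuousLinearMap.smul_apply, innerSL_apply_apply, real_inner_smul_left, smul_eq_mul]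
  have : ⟪d, v⟫ = ⟪d, v⟫ := rfl
  field_simp
  ring

lemma hess_eq (hεr : 0 < εr) (d : E3) :
    HasFDerivAt (fun d : E3 => (k * (1 - l / Real.sqrt (‖d‖ ^ 2 + εr))) • d)
      ((k * (1 - l / Real.sqrt (‖d‖ ^ 2 + εr))) • ContinuousLinearMap.id ℝ E3 +
        ((k * (l * (1 / (2 * Real.sqrt (‖d‖ ^ 2 + εr)) * 1 /
            Real.sqrt (‖d‖ ^ 2 + εr) ^ 2))) • (2 • innerSL ℝ d)).smulRight d) d := by
  have hs : 0 < ‖d‖ ^ 2 + εr := by positivity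
  have hsq : 0 < Real.sqrt (‖d‖ ^ 2 + εr) := Real.sqrt_pos.2 hs
  have ha : HasDerivAt (fun t : ℝ => t + εr) 1 (‖d‖ ^ 2) := (hasDerivAt_id _).add_const εr
  have hb := (Real.hasDerivAt_sqrt (ne_of_gt hs)).comp (‖d‖ ^ 2) ha
  have hc : HasDerivAt (fun t : ℝ => k * (1 - l / Real.sqrt (t + εr)))
      (k * (l * (1 / (2 * Real.sqrt (‖d‖ ^ 2 + εr)) * 1 / Real.sqrt (‖d‖ ^ 2 + εr) ^ 2)))
      (‖d‖ ^ 2) := by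
    have h4 := (hb.inv (ne_of_gt hsq)).const_mul l
    have h5 := ((hasDerivAt_const (‖d‖ ^ 2) (1:ℝ)).sub h4).const_mul k
    have : (fun t : ℝ => k * (1 - l / Real.sqrt (t + εr)))
        = fun t : ℝ => k * (1 - l * (((fun x => Real.sqrt x) ∘ fun t => t + εr) t)⁻¹) := by
      funext t; simp [Function.comp, div_eq_mul_inv]
    rw [this]
    refine h5.congr_deriv ?_
    simp only [Function.comp_apply]
    ring
  have h2 : HasFDerivAt (fun x : E3 => ‖x‖ ^ 2) (2 • innerSL ℝ d) d :=
    (hasStrictFDerivAt_norm_sq d).hasFDerivAt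
  have h3 := hc.comp_hasFDerivAt d h2
  exact h3.smul (hasFDerivAt_id d)

lemma bound_real {k εr l : ℝ} (hk : 0 < k) (hεr : 0 < εr) (hl : 0 < l)
    (a t dn vn : ℝ) (hb : 0 < Real.sqrt εr) (hba : Real.sqrt εr ≤ a)
    (hvn : 0 ≤ vn) (hts : t ^ 2 ≤ dn * vn) (hdn : dn ≤ a ^ 2) :
    |k * (1 - l / a) * vn + k * l * t ^ 2 / a ^ 3| ≤ k * (1 + 2 * l / Real.sqrt εr) * vn := by
  set b := Real.sqrt εr
  have ha : 0 < a := lt_of_lt_of_le hb hba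
  have h1 : |k * (1 - l / a) * vn| ≤ k * (1 + l / b) * vn := by
    rw [abs_mul, abs_mul, abs_of_nonneg hvn, abs_of_nonneg hk.le]
    gcongr
    calc |1 - l / a| ≤ |(1:ℝ)| + |l / a| := abs_sub _ _
      _ = 1 + l / a := by rw [abs_one, abs_of_nonneg (by positivity)]
      _ ≤ 1 + l / b := by gcongr
  have h2 : |k * l * t ^ 2 / a ^ 3| ≤ k * l * vn / b := by
    rw [abs_of_nonneg (by positivity)]
    calc k * l * t ^ 2 / a ^ 3 ≤ k * l * (a ^ 2 * vn) / a ^ 3 := by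
          gcongr
          nlinarith
      _ = k * l * vn / a := by field_simp
      _ ≤ k * l * vn / b := by gcongr
  calc |k * (1 - l / a) * vn + k * l * t ^ 2 / a ^ 3|
      ≤ |k * (1 - l / a) * vn| + |k * l * t ^ 2 / a ^ 3| := abs_add_le _ _
    _ ≤ k * (1 + l / b) * vn + k * l * vn / b := add_le_add h1 h2
    _ = k * (1 + 2 * l / b) * vn := by ring

theorem stmt4 (k εr l : ℝ) (hk : 0 < k) (hεr : 0 < εr) (hl : 0 < l) :
    ∀ (d v : EuclideanSpace ℝ (Fin 3)),
      |⟪(fderiv ℝ (gradient (fun d : EuclideanSpace ℝ (Fin 3) =>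
          k / 2 * (Real.sqrt (‖d‖ ^ 2 + εr) - l) ^ 2)) d) v, v⟫| ≤
        k * (1 + 2 * l / Real.sqrt εr) * ‖v‖ ^ 2 := by
  intro d v
  have hgrad : gradient (fun d : EuclideanSpace ℝ (Fin 3) =>
      k / 2 * (Real.sqrt (‖d‖ ^ 2 + εr) - l) ^ 2)
      = fun d : E3 => (k * (1 - l / Real.sqrt (‖d‖ ^ 2 + εr))) • d :=
    gradient_eq fun x => grad_eq hεr x
  rw [hgrad, (hess_eq hεr d).fderiv]
  have hs : 0 < ‖d‖ ^ 2 + εr := by positivity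
  have hsq : 0 < Real.sqrt (‖d‖ ^ 2 + εr) := Real.sqrt_pos.2 hs
  set a := Real.sqrt (‖d‖ ^ 2 + εr) with ha
  have hinner : ⟪((k * (1 - l / a)) • ContinuousLinearMap.id ℝ E3 +
        ((k * (l * (1 / (2 * a) * 1 / a ^ 2))) • (2 • innerSL ℝ d)).smulRight d) v, v⟫
      = k * (1 - l / a) * ‖v‖ ^ 2 + k * l * ⟪d, v⟫ ^ 2 / a ^ 3 := by
    simp only [ContinuousLinearMap.add_apply, ContinuousLinearMap.smul_apply,
      ContinuousLinearMap.id_apply, ContinuousLinearMap.smulRight_apply, innerSL_apply_apply,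
      smul_eq_mul, inner_add_left, real_inner_smul_left, real_inner_self_eq_norm_sq]
    field_simp
    ring
  rw [hinner]
  have hba : Real.sqrt εr ≤ a := Real.sqrt_le_sqrt (by nlinarith [sq_nonneg ‖d‖])
  have hts : ⟪d, v⟫ ^ 2 ≤ ‖d‖ ^ 2 * ‖v‖ ^ 2 := by
    have := abs_real_inner_le_norm d v
    calc ⟪d, v⟫ ^ 2 = |⟪d, v⟫| ^ 2 := (sq_abs _).symm
      _ ≤ (‖d‖ * ‖v‖) ^ 2 := by gcongr
      _ = ‖d‖ ^ 2 * ‖v‖ ^ 2 := by ring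
  have hdn : ‖d‖ ^ 2 ≤ a ^ 2 := by rw [ha, Real.sq_sqrt hs.le]; linarith
  exact bound_real hk hεr hl a ⟪d, v⟫ (‖d‖ ^ 2) (‖v‖ ^ 2) (Real.sqrt_pos.2 hεr) hba
    (by positivity) hts hdn
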